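/- Let T be a binary tree of size n. Then ExtL(T) ⊆ ExtL(inc(T)), and there exists σ ∈ ExtL(T) such that every μ ∈ ExtL(inc(T)) satisfies coinv(μ) ⊆ coinv(σ) (i.e. the weak-order-maximal linear extension of inc(T) is a linear extension of T). Symmetrically, ExtL(T) ⊆ ExtL(dec(T)) and there exists τ ∈ ExtL(T) such that every μ ∈ ExtL(dec(T)) satisfies coinv(τ) ⊆ coinv(μ). -/

import Mathlib

open Polynomial

/-- A binary tree: either the empty tree or a pair of binary trees
(left and right subtrees) grafted on an internal node. -/
inductive BinTree : Type
  | leaf : BinTree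
  | node : BinTree → BinTree → BinTree

namespace BinTree

/-- The size of a binary tree: its number of internal nodes. -/
def size : BinTree → ℕ
  | leaf => 0
  | node l r => l.size + r.size + 1

/-- One right rotation somewhere in the tree: `Rot T T'` means that `T'` is obtained
from `T` by replacing one subtree of the form `y(x(A,B),C)` by `x(A,y(B,C))`. -/
inductive Rot : BinTree → BinTree → Prop
  | root (A B C : BinTree) : Rot (node (node A B) C) (node A (node B C))
  | left {L L' : BinTree} (R : BinTree) : Rot L L' → Rot (node L R) (node L' R)
  | right (L : BinTree) {R R' : BinTree} : Rot R R' → Rot (node L R) (node L R')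

/-- The Tamari order: `TamariLE T T'` iff `T'` is obtained from `T` by a (possibly empty)
sequence of right rotations. -/
def TamariLE (T T' : BinTree) : Prop := Relation.ReflTransGen Rot T T'

/-- The Tamari polynomial `B_T ∈ ℤ[x]`: `B_∅ = 1` and for `T = x(L,R)`, `B_T` is the
unique polynomial with `(x-1)·B_T = x·B_L·(x·B_R - B_R(1))` (exact division by the
monic polynomial `X - 1`, the right-hand side vanishing at `x = 1`). -/
noncomputable def tamPoly : BinTree → Polynomial ℤ
  | leaf => 1
  | node l r =>
      (X * tamPoly l * (X * tamPoly r - C ((tamPoly r).eval 1))) /ₘ (X - C 1)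

/-- The mirror Tamari polynomial, obtained by exchanging the roles of the left and
right subtrees in the recursive definition of the Tamari polynomial. -/
noncomputable def tamPolyMirror : BinTree → Polynomial ℤ
  | leaf => 1
  | node l r =>
      (X * tamPolyMirror r * (X * tamPolyMirror l - C ((tamPolyMirror l).eval 1))) /ₘ (X - C 1)

/-- The number of nodes on the left border of a binary tree. -/
def leftBorder : BinTree → ℕ
  | leaf => 0
  | node l _ => l.leftBorder + 1

/-- The number of nodes on the right border of a binary tree. -/
def rightBorder : BinTree → ℕ
  | leaf => 0
  | node _ r => r.rightBorder + 1

/-- `inSub T a b`: in the unique binary-search-tree labelling of `T` by `1,…,size T`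
(all labels of the left subtree of a node are smaller than its label, all labels of its
right subtree are larger), the node labelled `a` belongs to the subtree rooted at the
node labelled `b` (in particular `inSub T a a` holds for every node label `a`). -/
def inSub : BinTree → ℕ → ℕ → Prop
  | leaf => fun _ _ => False
  | node l r => fun a b =>
      (b = l.size + 1 ∧ 1 ≤ a ∧ a ≤ l.size + r.size + 1) ∨
      inSub l a b ∨
      (l.size + 1 < a ∧ l.size + 1 < b ∧ inSub r (a - (l.size + 1)) (b - (l.size + 1)))

/-- The binary search tree poset of `T`: `bstRel T a b` iff `a ≺_T b`, i.e. `a ≠ b` and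
the node labelled `a` is in the subtree rooted at the node labelled `b`. -/
def bstRel (T : BinTree) (a b : ℕ) : Prop := a ≠ b ∧ inSub T a b

/-- The increasing forest `inc(T)`: `a ≺ b` iff `a < b` and `a ≺_T b`. -/
def incRel (T : BinTree) (a b : ℕ) : Prop := a < b ∧ bstRel T a b

/-- The decreasing forest `dec(T)`: `b ≺ a` iff `b > a` and `b ≺_T a`. -/
def decRel (T : BinTree) (a b : ℕ) : Prop := b < a ∧ bstRel T a b

/-- The relations of the interval-poset `IP[T,T']`: exactly those of `dec(T)`
together with those of `inc(T')`. -/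
def IPrel (T T' : BinTree) (a b : ℕ) : Prop := decRel T a b ∨ incRel T' a b

end BinTree

open BinTree

/-- `σ` is a linear extension of the strict relation `rel` on `{1,…,n}`: reading the word
`σ(1)…σ(n)` (the `i`-th letter being the label `(σ i : ℕ) + 1`), whenever `rel a b` holds
the letter `a` appears before the letter `b`. -/
def IsLinExt (n : ℕ) (rel : ℕ → ℕ → Prop) (σ : Equiv.Perm (Fin n)) : Prop :=
  ∀ i j : Fin n, rel ((σ i : ℕ) + 1) ((σ j : ℕ) + 1) → i < j

/-- An interval-poset of size `n`: a (strict) poset on `{1,…,n}` such that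
`a ≺ c` implies `b ≺ c` for all `a < b < c`, and `c ≺ a` implies `b ≺ a` for all
`a < b < c`. -/
def IsIntervalPoset (n : ℕ) (rel : ℕ → ℕ → Prop) : Prop :=
  (∀ a b, rel a b → 1 ≤ a ∧ a ≤ n ∧ 1 ≤ b ∧ b ≤ n) ∧
  (∀ a, ¬ rel a a) ∧
  (∀ a b c, rel a b → rel b c → rel a c) ∧
  (∀ a b c, a < b → b < c → rel a c → rel b c) ∧
  (∀ a b c, a < b → b < c → rel c a → rel b a)

/-- `trees(P)` : the number of connected components of the forest formed by the decreasing
relations of `P`, i.e. the number of `k ∈ {1,…,n}` such that there is no `j < k`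
with `k ≺_P j`. -/
noncomputable def treeStat (n : ℕ) (rel : ℕ → ℕ → Prop) : ℕ :=
  Set.ncard {k : ℕ | 1 ≤ k ∧ k ≤ n ∧ ∀ j, j < k → ¬ rel k j}

/-- The composition `𝔹(I1,I2)` of two interval-posets of sizes `k1` and `k2`:
the set of interval-posets `I` of size `k1+k2+1` such that
(i) the relations of `I` among `1,…,k1` are exactly those of `I1`,
(ii) the relations of `I` among `k1+2,…,k1+k2+1` are exactly those of `I2` shifted
by `k1+1`, (iii) `i ≺_I k1+1` for all `i ≤ k1`, and (iv) there is no relation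
`k1+1 ≺_I j` for `j > k1+1`. -/
def Comp (k1 k2 : ℕ) (I1 I2 : ℕ → ℕ → Prop) : Set (ℕ → ℕ → Prop) :=
  {I | IsIntervalPoset (k1 + k2 + 1) I ∧
    (∀ a b, 1 ≤ a → a ≤ k1 → 1 ≤ b → b ≤ k1 → (I a b ↔ I1 a b)) ∧
    (∀ a b, k1 + 2 ≤ a → a ≤ k1 + k2 + 1 → k1 + 2 ≤ b → b ≤ k1 + k2 + 1 →
      (I a b ↔ I2 (a - (k1 + 1)) (b - (k1 + 1)))) ∧
    (∀ i, 1 ≤ i → i ≤ k1 → I i (k1 + 1)) ∧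
    (∀ j, k1 + 1 < j → ¬ I (k1 + 1) j)}

/-- The co-inversions of a permutation `σ` of `{1,…,n}` (written as the word
`σ(1)…σ(n)`): pairs `(σ(i), σ(j))` with `i < j` and `σ(i) > σ(j)`. -/
def coinv (n : ℕ) (σ : Equiv.Perm (Fin n)) : Set (Fin n × Fin n) :=
  {p | ∃ i j : Fin n, i < j ∧ σ j < σ i ∧ p = (σ i, σ j)}


section Aux18

open List

/-- Reading word `right subtree (shifted), left subtree, root`. -/
def wMax : BinTree → List ℕ
  | .leaf => []
  | .node l r => ((wMax r).map (· + (l.size + 1))) ++ wMax l ++ [l.size + 1]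

/-- Reading word `left subtree, right subtree (shifted), root`. -/
def wMin : BinTree → List ℕ
  | .leaf => []
  | .node l r => wMin l ++ ((wMin r).map (· + (l.size + 1))) ++ [l.size + 1]

@[simp] lemma inSub_leaf' (a b : ℕ) : inSub .leaf a b ↔ False := Iff.rfl

lemma inSub_node' (l r : BinTree) (a b : ℕ) : inSub (.node l r) a b ↔
    ((b = l.size + 1 ∧ 1 ≤ a ∧ a ≤ l.size + r.size + 1) ∨
      inSub l a b ∨
      (l.size + 1 < a ∧ l.size + 1 < b ∧ inSub r (a - (l.size + 1)) (b - (l.size + 1)))) :=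
  Iff.rfl

lemma inSub_bounds : ∀ (T : BinTree) (a b : ℕ), inSub T a b →
    1 ≤ a ∧ a ≤ T.size ∧ 1 ≤ b ∧ b ≤ T.size := by
  intro T
  induction T with
  | leaf => intro a b h; exact h.elim
  | node l r ihl ihr =>
    intro a b h
    rcases (inSub_node' l r a b).1 h with ⟨rfl, h1, h2⟩ | h | ⟨h1, h2, h⟩
    · simp only [size]; omega
    · have := ihl a b h; simp only [size]; omega
    · have := ihr _ _ h; simp only [size]; omega

lemma mem_wMax : ∀ (T : BinTree) (x : ℕ), x ∈ wMax T ↔ 1 ≤ x ∧ x ≤ T.size := by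
  intro T
  induction T with
  | leaf => intro x; simp [wMax, size]; omega
  | node l r ihl ihr =>
    intro x
    simp only [wMax, size, List.mem_append, List.mem_map, List.mem_singleton, ihl, ihr]
    constructor
    · rintro ((⟨y, hy, rfl⟩ | h) | rfl) <;> omega
    · intro hx
      by_cases h1 : x ≤ l.size
      · exact Or.inl (Or.inr ⟨by omega, h1⟩)
      by_cases h2 : x = l.size + 1
      · exact Or.inr h2
      · exact Or.inl (Or.inl ⟨x - (l.size + 1), ⟨by omega, by omega⟩, by omega⟩)

lemma mem_wMin : ∀ (T : BinTree) (x : ℕ), x ∈ wMin T ↔ 1 ≤ x ∧ x ≤ T.size := by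
  intro T
  induction T with
  | leaf => intro x; simp [wMin, size]; omega
  | node l r ihl ihr =>
    intro x
    simp only [wMin, size, List.mem_append, List.mem_map, List.mem_singleton, ihl, ihr]
    constructor
    · rintro ((h | ⟨y, hy, rfl⟩) | rfl) <;> omega
    · intro hx
      by_cases h1 : x ≤ l.size
      · exact Or.inl (Or.inl ⟨by omega, h1⟩)
      by_cases h2 : x = l.size + 1
      · exact Or.inr h2
      · exact Or.inl (Or.inr ⟨x - (l.size + 1), ⟨by omega, by omega⟩, by omega⟩)

lemma length_wMax : ∀ T : BinTree, (wMax T).length = T.size := by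
  intro T
  induction T with
  | leaf => simp [wMax, size]
  | node l r ihl ihr => simp [wMax, size, ihl, ihr]; omega

lemma length_wMin : ∀ T : BinTree, (wMin T).length = T.size := by
  intro T
  induction T with
  | leaf => simp [wMin, size]
  | node l r ihl ihr => simp [wMin, size, ihl, ihr]; omega

lemma nodup_wMax : ∀ T : BinTree, (wMax T).Nodup := by
  intro T
  induction T with
  | leaf => simp [wMax]
  | node l r ihl ihr =>
    have hA : ((wMax r).map (· + (l.size + 1))).Nodup :=
      ihr.map (fun a b h => by omega)
    rw [wMax, List.nodup_append, List.nodup_append]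
    refine ⟨⟨hA, ihl, ?_⟩, List.nodup_singleton _, ?_⟩
    · intro x hx _ hx' rfl
      rw [mem_wMax] at hx'
      simp only [List.mem_map, mem_wMax] at hx
      obtain ⟨y, hy, rfl⟩ := hx
      omega
    · intro x hx _ hx' rfl
      simp only [List.mem_singleton] at hx'
      subst hx'
      rcases List.mem_append.1 hx with h | h
      · simp only [List.mem_map, mem_wMax] at h
        obtain ⟨y, hy, he⟩ := h
        omega
      · rw [mem_wMax] at h
        omega

lemma nodup_wMin : ∀ T : BinTree, (wMin T).Nodup := by
  intro T
  induction T with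
  | leaf => simp [wMin]
  | node l r ihl ihr =>
    have hA : ((wMin r).map (· + (l.size + 1))).Nodup :=
      ihr.map (fun a b h => by omega)
    rw [wMin, List.nodup_append, List.nodup_append]
    refine ⟨⟨ihl, hA, ?_⟩, List.nodup_singleton _, ?_⟩
    · intro x hx _ hx' rfl
      rw [mem_wMin] at hx
      simp only [List.mem_map, mem_wMin] at hx'
      obtain ⟨y, hy, he⟩ := hx'
      omega
    · intro x hx _ hx' rfl
      simp only [List.mem_singleton] at hx'
      subst hx'
      rcases List.mem_append.1 hx with h | h
      · rw [mem_wMin] at h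
        omega
      · simp only [List.mem_map, mem_wMin] at h
        obtain ⟨y, hy, he⟩ := h
        omega

lemma indexOf_map_add (m : ℕ) : ∀ (l : List ℕ) (a : ℕ),
    (l.map (· + m)).idxOf (a + m) = l.idxOf a := by
  intro l
  induction l with
  | nil => intro a; simp
  | cons b t ih =>
    intro a
    by_cases h : a = b
    · subst h; simp
    · rw [List.map_cons, List.idxOf_cons_ne _ (by omega), List.idxOf_cons_ne _ (by omega), ih]

lemma wMax_ext : ∀ (T : BinTree) (a b : ℕ), bstRel T a b →
    (wMax T).idxOf a < (wMax T).idxOf b := by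
  intro T
  induction T with
  | leaf => intro a b h; exact h.2.elim
  | node l r ihl ihr =>
    intro a b h
    obtain ⟨hne, hsub⟩ := h
    set m := l.size + 1 with hm
    set A := (wMax r).map (· + m) with hA
    set B := wMax l with hB
    have lenA : A.length = r.size := by simp [hA, length_wMax]
    have lenB : B.length = l.size := by rw [hB, length_wMax]
    have memA : ∀ x, x ∈ A ↔ m + 1 ≤ x ∧ x ≤ m + r.size := by
      intro x
      simp only [hA, List.mem_map, mem_wMax]
      constructor
      · rintro ⟨y, hy, rfl⟩; omega
      · intro hx; exact ⟨x - m, ⟨by omega, by omega⟩, by omega⟩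
    have memB : ∀ x, x ∈ B ↔ 1 ≤ x ∧ x ≤ l.size := fun x => mem_wMax l x
    have hw : wMax (.node l r) = A ++ (B ++ [m]) := by
      rw [wMax, List.append_assoc]
    have idxB : ∀ x, x ∈ B → (wMax (.node l r)).idxOf x = r.size + B.idxOf x := by
      intro x hx
      rw [hw, List.idxOf_append_of_notMem (by rw [memA]; rw [memB] at hx; omega),
        List.idxOf_append_of_mem hx, lenA]
    have idxm : (wMax (.node l r)).idxOf m = r.size + l.size := by
      rw [hw, List.idxOf_append_of_notMem (by rw [memA]; omega),
        List.idxOf_append_of_notMem (by rw [memB]; omega), lenA, lenB]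
      simp
    have idxA : ∀ y, y ∈ wMax r → (wMax (.node l r)).idxOf (y + m) = (wMax r).idxOf y := by
      intro y hy
      rw [hw, List.idxOf_append_of_mem (by rw [memA]; rw [mem_wMax] at hy; omega), hA,
        indexOf_map_add]
    rcases (inSub_node' l r a b).1 hsub with ⟨rfl, ha1, ha2⟩ | hsub | ⟨hma, hmb, hsub⟩
    · rw [idxm]
      have haw : a ∈ A ∨ a ∈ B := by
        by_cases hA' : a ∈ A
        · exact Or.inl hA'
        · refine Or.inr ((memB a).2 ?_)
          rw [memA] at hA'; omega
      rcases haw with hmemh | hmemh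
      · have hbnd := (memA a).1 hmemh
        have hy : a - m ∈ wMax r := (mem_wMax _ _).2 ⟨by omega, by omega⟩
        have hidx := idxA (a - m) hy
        rw [show a - m + m = a by omega] at hidx
        rw [hidx]
        have hlt := List.idxOf_lt_length_iff.2 hy
        rw [length_wMax] at hlt; omega
      · rw [idxB a hmemh]
        have hlt := List.idxOf_lt_length_iff.2 hmemh
        rw [lenB] at hlt; omega
    · have hb := inSub_bounds l _ _ hsub
      rw [idxB a ((memB a).2 ⟨hb.1, hb.2.1⟩), idxB b ((memB b).2 ⟨hb.2.2.1, hb.2.2.2⟩)]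
      have := ihl a b ⟨hne, hsub⟩
      omega
    · have hb := inSub_bounds r _ _ hsub
      have h1 := idxA (a - m) ((mem_wMax _ _).2 ⟨hb.1, hb.2.1⟩)
      have h2 := idxA (b - m) ((mem_wMax _ _).2 ⟨hb.2.2.1, hb.2.2.2⟩)
      rw [show a - m + m = a by omega] at h1
      rw [show b - m + m = b by omega] at h2
      rw [h1, h2]
      exact ihr _ _ ⟨by omega, hsub⟩

lemma wMin_ext : ∀ (T : BinTree) (a b : ℕ), bstRel T a b →
    (wMin T).idxOf a < (wMin T).idxOf b := by
  intro T
  induction T with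
  | leaf => intro a b h; exact h.2.elim
  | node l r ihl ihr =>
    intro a b h
    obtain ⟨hne, hsub⟩ := h
    set m := l.size + 1 with hm
    set A := (wMin r).map (· + m) with hA
    set B := wMin l with hB
    have lenA : A.length = r.size := by simp [hA, length_wMin]
    have lenB : B.length = l.size := by rw [hB, length_wMin]
    have memA : ∀ x, x ∈ A ↔ m + 1 ≤ x ∧ x ≤ m + r.size := by
      intro x
      simp only [hA, List.mem_map, mem_wMin]
      constructor
      · rintro ⟨y, hy, rfl⟩; omega
      · intro hx; exact ⟨x - m, ⟨by omega, by omega⟩, by omega⟩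
    have memB : ∀ x, x ∈ B ↔ 1 ≤ x ∧ x ≤ l.size := fun x => mem_wMin l x
    have hw : wMin (.node l r) = B ++ (A ++ [m]) := by
      rw [wMin, List.append_assoc]
    have idxB : ∀ x, x ∈ B → (wMin (.node l r)).idxOf x = B.idxOf x := by
      intro x hx
      rw [hw, List.idxOf_append_of_mem hx]
    have idxm : (wMin (.node l r)).idxOf m = l.size + r.size := by
      rw [hw, List.idxOf_append_of_notMem (by rw [memB]; omega),
        List.idxOf_append_of_notMem (by rw [memA]; omega), lenA, lenB]
      simp
    have idxA : ∀ y, y ∈ wMin r →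
        (wMin (.node l r)).idxOf (y + m) = l.size + (wMin r).idxOf y := by
      intro y hy
      have hym : y + m ∉ B := by rw [memB]; rw [mem_wMin] at hy; omega
      rw [hw, List.idxOf_append_of_notMem hym,
        List.idxOf_append_of_mem (by rw [memA]; rw [mem_wMin] at hy; omega), hA,
        indexOf_map_add, lenB]
    rcases (inSub_node' l r a b).1 hsub with ⟨rfl, ha1, ha2⟩ | hsub | ⟨hma, hmb, hsub⟩
    · rw [idxm]
      have haw : a ∈ A ∨ a ∈ B := by
        by_cases hA' : a ∈ A
        · exact Or.inl hA'
        · refine Or.inr ((memB a).2 ?_)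
          rw [memA] at hA'; omega
      rcases haw with hmemh | hmemh
      · have hbnd := (memA a).1 hmemh
        have hy : a - m ∈ wMin r := (mem_wMin _ _).2 ⟨by omega, by omega⟩
        have hidx := idxA (a - m) hy
        rw [show a - m + m = a by omega] at hidx
        rw [hidx]
        have hlt := List.idxOf_lt_length_iff.2 hy
        rw [length_wMin] at hlt; omega
      · rw [idxB a hmemh]
        have hlt := List.idxOf_lt_length_iff.2 hmemh
        rw [lenB] at hlt; omega
    · have hb := inSub_bounds l _ _ hsub
      rw [idxB a ((memB a).2 ⟨hb.1, hb.2.1⟩), idxB b ((memB b).2 ⟨hb.2.2.1, hb.2.2.2⟩)]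
      exact ihl a b ⟨hne, hsub⟩
    · have hb := inSub_bounds r _ _ hsub
      have h1 := idxA (a - m) ((mem_wMin _ _).2 ⟨hb.1, hb.2.1⟩)
      have h2 := idxA (b - m) ((mem_wMin _ _).2 ⟨hb.2.2.1, hb.2.2.2⟩)
      rw [show a - m + m = a by omega] at h1
      rw [show b - m + m = b by omega] at h2
      rw [h1, h2]
      have := ihr _ _ (⟨by omega, hsub⟩ : bstRel r (a - m) (b - m))
      omega

lemma wMax_max : ∀ (T : BinTree) (a b : ℕ), b < a → a ∈ wMax T → b ∈ wMax T →
    (wMax T).idxOf b < (wMax T).idxOf a → incRel T b a := by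
  intro T
  induction T with
  | leaf => intro a b _ ha; simp [wMax] at ha
  | node l r ihl ihr =>
    intro a b hba ha hb hidx
    set m := l.size + 1 with hm
    set A := (wMax r).map (· + m) with hA
    set B := wMax l with hB
    have lenA : A.length = r.size := by simp [hA, length_wMax]
    have lenB : B.length = l.size := by rw [hB, length_wMax]
    have memA : ∀ x, x ∈ A ↔ m + 1 ≤ x ∧ x ≤ m + r.size := by
      intro x
      simp only [hA, List.mem_map, mem_wMax]
      constructor
      · rintro ⟨y, hy, rfl⟩; omega
      · intro hx; exact ⟨x - m, ⟨by omega, by omega⟩, by omega⟩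
    have memB : ∀ x, x ∈ B ↔ 1 ≤ x ∧ x ≤ l.size := fun x => mem_wMax l x
    have hw : wMax (.node l r) = A ++ (B ++ [m]) := by
      rw [wMax, List.append_assoc]
    have idxB : ∀ x, x ∈ B → (wMax (.node l r)).idxOf x = r.size + B.idxOf x := by
      intro x hx
      rw [hw, List.idxOf_append_of_notMem (by rw [memA]; rw [memB] at hx; omega),
        List.idxOf_append_of_mem hx, lenA]
    have idxm : (wMax (.node l r)).idxOf m = r.size + l.size := by
      rw [hw, List.idxOf_append_of_notMem (by rw [memA]; omega),
        List.idxOf_append_of_notMem (by rw [memB]; omega), lenA, lenB]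
      simp
    have idxA : ∀ y, y ∈ wMax r → (wMax (.node l r)).idxOf (y + m) = (wMax r).idxOf y := by
      intro y hy
      rw [hw, List.idxOf_append_of_mem (by rw [memA]; rw [mem_wMax] at hy; omega), hA,
        indexOf_map_add]
    have hna := (mem_wMax _ a).1 ha
    have hnb := (mem_wMax _ b).1 hb
    simp only [size] at hna hnb
    by_cases ham : a = m
    · subst ham
      exact ⟨hba, by omega, Or.inl ⟨rfl, by omega, by omega⟩⟩
    by_cases hbm : b = m
    · subst hbm
      exfalso
      rw [idxm] at hidx
      by_cases haA : a ∈ A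
      · have hbnd := (memA a).1 haA
        have hy : a - m ∈ wMax r := (mem_wMax _ _).2 ⟨by omega, by omega⟩
        have hidxa := idxA (a - m) hy
        rw [show a - m + m = a by omega] at hidxa
        rw [hidxa] at hidx
        have hlt := List.idxOf_lt_length_iff.2 hy
        rw [length_wMax] at hlt; omega
      · have haB : a ∈ B := (memB a).2 (by rw [memA] at haA; omega)
        rw [idxB a haB] at hidx
        have hlt := List.idxOf_lt_length_iff.2 haB
        rw [lenB] at hlt; omega
    by_cases haA : a ∈ A
    · -- a in right block
      have hbndA := (memA a).1 haA
      have hya : a - m ∈ wMax r := (mem_wMax _ _).2 ⟨by omega, by omega⟩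
      have hidxa := idxA (a - m) hya
      rw [show a - m + m = a by omega] at hidxa
      have hltA : (wMax (.node l r)).idxOf a < r.size := by
        rw [hidxa]
        have hlt := List.idxOf_lt_length_iff.2 hya
        rwa [length_wMax] at hlt
      have hbA : b ∈ A := by
        by_contra hbA
        have hbB : b ∈ B := (memB b).2 (by rw [memA] at hbA; omega)
        rw [idxB b hbB] at hidx; omega
      have hbndB := (memA b).1 hbA
      have hyb : b - m ∈ wMax r := (mem_wMax _ _).2 ⟨by omega, by omega⟩
      have hidxb := idxA (b - m) hyb
      rw [show b - m + m = b by omega] at hidxb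
      rw [hidxa, hidxb] at hidx
      have hrec := ihr (a - m) (b - m) (by omega) hya hyb hidx
      exact ⟨hba, by omega, Or.inr (Or.inr ⟨by omega, by omega, hrec.2.2⟩)⟩
    · -- a in left block
      have haB : a ∈ B := (memB a).2 (by rw [memA] at haA; omega)
      have hbndA := (memB a).1 haB
      have hbB : b ∈ B := by
        refine (memB b).2 ?_
        by_contra hc
        have hbA : b ∈ A := by
          rcases (List.mem_append.1 ((hw ▸ hb : b ∈ A ++ (B ++ [m])))) with h | h
          · exact h
          · rcases List.mem_append.1 h with h | h
            · exact absurd ((memB b).1 h) hc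
            · simp at h; exact absurd h hbm
        have := (memA b).1 hbA
        omega
      rw [idxB a haB, idxB b hbB] at hidx
      have hrec := ihl a b hba haB hbB (by omega)
      exact ⟨hba, by omega, Or.inr (Or.inl hrec.2.2)⟩

lemma wMin_min : ∀ (T : BinTree) (a b : ℕ), b < a → a ∈ wMin T → b ∈ wMin T →
    (wMin T).idxOf a < (wMin T).idxOf b → decRel T a b := by
  intro T
  induction T with
  | leaf => intro a b _ ha; simp [wMin] at ha
  | node l r ihl ihr =>
    intro a b hba ha hb hidx
    set m := l.size + 1 with hm
    set A := (wMin r).map (· + m) with hA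
    set B := wMin l with hB
    have lenA : A.length = r.size := by simp [hA, length_wMin]
    have lenB : B.length = l.size := by rw [hB, length_wMin]
    have memA : ∀ x, x ∈ A ↔ m + 1 ≤ x ∧ x ≤ m + r.size := by
      intro x
      simp only [hA, List.mem_map, mem_wMin]
      constructor
      · rintro ⟨y, hy, rfl⟩; omega
      · intro hx; exact ⟨x - m, ⟨by omega, by omega⟩, by omega⟩
    have memB : ∀ x, x ∈ B ↔ 1 ≤ x ∧ x ≤ l.size := fun x => mem_wMin l x
    have hw : wMin (.node l r) = B ++ (A ++ [m]) := by
      rw [wMin, List.append_assoc]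
    have idxB : ∀ x, x ∈ B → (wMin (.node l r)).idxOf x = B.idxOf x := by
      intro x hx
      rw [hw, List.idxOf_append_of_mem hx]
    have idxm : (wMin (.node l r)).idxOf m = l.size + r.size := by
      rw [hw, List.idxOf_append_of_notMem (by rw [memB]; omega),
        List.idxOf_append_of_notMem (by rw [memA]; omega), lenA, lenB]
      simp
    have idxA : ∀ y, y ∈ wMin r →
        (wMin (.node l r)).idxOf (y + m) = l.size + (wMin r).idxOf y := by
      intro y hy
      have hym : y + m ∉ B := by rw [memB]; rw [mem_wMin] at hy; omega
      rw [hw, List.idxOf_append_of_notMem hym,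
        List.idxOf_append_of_mem (by rw [memA]; rw [mem_wMin] at hy; omega), hA,
        indexOf_map_add, lenB]
    have hna := (mem_wMin _ a).1 ha
    have hnb := (mem_wMin _ b).1 hb
    simp only [size] at hna hnb
    by_cases hbm : b = m
    · subst hbm
      exact ⟨hba, by omega, Or.inl ⟨rfl, by omega, by omega⟩⟩
    by_cases ham : a = m
    · subst ham
      exfalso
      rw [idxm] at hidx
      by_cases hbA : b ∈ A
      · have hbnd := (memA b).1 hbA
        have hy : b - m ∈ wMin r := (mem_wMin _ _).2 ⟨by omega, by omega⟩
        have hidxb := idxA (b - m) hy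
        rw [show b - m + m = b by omega] at hidxb
        rw [hidxb] at hidx
        have hlt := List.idxOf_lt_length_iff.2 hy
        rw [length_wMin] at hlt; omega
      · have hbB : b ∈ B := (memB b).2 (by rw [memA] at hbA; omega)
        rw [idxB b hbB] at hidx
        have hlt := List.idxOf_lt_length_iff.2 hbB
        rw [lenB] at hlt; omega
    by_cases hbB : b ∈ B
    · -- b in left block
      have hbndB := (memB b).1 hbB
      have haB : a ∈ B := by
        by_contra haB
        have haA : a ∈ A := by
          rcases (List.mem_append.1 ((hw ▸ ha : a ∈ B ++ (A ++ [m])))) with h | h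
          · exact absurd h haB
          · rcases List.mem_append.1 h with h | h
            · exact h
            · simp at h; exact absurd h ham
        have hbnd := (memA a).1 haA
        have hya : a - m ∈ wMin r := (mem_wMin _ _).2 ⟨by omega, by omega⟩
        have hidxa := idxA (a - m) hya
        rw [show a - m + m = a by omega] at hidxa
        rw [hidxa, idxB b hbB] at hidx
        have hlt := List.idxOf_lt_length_iff.2 hbB
        rw [lenB] at hlt; omega
      rw [idxB a haB, idxB b hbB] at hidx
      have hrec := ihl a b hba haB hbB hidx
      exact ⟨hba, by omega, Or.inr (Or.inl hrec.2.2)⟩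
    · -- b in right block
      have hbA : b ∈ A := by
        rcases (List.mem_append.1 ((hw ▸ hb : b ∈ B ++ (A ++ [m])))) with h | h
        · exact absurd h hbB
        · rcases List.mem_append.1 h with h | h
          · exact h
          · simp at h; exact absurd h hbm
      have hbndb := (memA b).1 hbA
      have haA : a ∈ A := (memA a).2 (by omega)
      have hbnda := (memA a).1 haA
      have hya : a - m ∈ wMin r := (mem_wMin _ _).2 ⟨by omega, by omega⟩
      have hyb : b - m ∈ wMin r := (mem_wMin _ _).2 ⟨by omega, by omega⟩
      have hidxa := idxA (a - m) hya
      have hidxb := idxA (b - m) hyb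
      rw [show a - m + m = a by omega] at hidxa
      rw [show b - m + m = b by omega] at hidxb
      rw [hidxa, hidxb] at hidx
      have hrec := ihr (a - m) (b - m) (by omega) hya hyb (by omega)
      exact ⟨hba, by omega, Or.inr (Or.inr ⟨by omega, by omega, hrec.2.2⟩)⟩

lemma exists_perm_of_word (n : ℕ) (w : List ℕ) (hlen : w.length = n) (hnd : w.Nodup)
    (hmem : ∀ x, x ∈ w ↔ 1 ≤ x ∧ x ≤ n) :
    ∃ σ : Equiv.Perm (Fin n), ∀ i : Fin n, w.idxOf ((σ i : ℕ) + 1) = (i : ℕ) := by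
  have hb : ∀ x, x ∈ w → 1 ≤ x ∧ x ≤ n := fun x hx => (hmem x).1 hx
  let f : ∀ x : ℕ, x ∈ w → Fin n := fun x hx => ⟨x - 1, by have := hb x hx; omega⟩
  let wf : List (Fin n) := w.pmap f (fun a ha => ha)
  have hlenf : n = wf.length := by simp [wf, hlen]
  have hndf : wf.Nodup := by
    refine hnd.pmap ?_
    intro a ha b hb' hab
    have h1 := hb a ha
    have h2 := hb b hb'
    have h3 : a - 1 = b - 1 := congrArg Fin.val hab
    omega
  have hall : ∀ y : Fin n, y ∈ wf := by
    intro y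
    rw [List.mem_pmap]
    refine ⟨(y : ℕ) + 1, (hmem _).2 ⟨by omega, by have := y.isLt; omega⟩, ?_⟩
    simp [f]
  refine ⟨(finCongr hlenf).trans (hndf.getEquivOfForallMemList wf hall), fun i => ?_⟩
  have hi : (i : ℕ) < w.length := by rw [hlen]; exact i.isLt
  have h1 : (((finCongr hlenf).trans (hndf.getEquivOfForallMemList wf hall)) i : Fin n)
      = wf.get (finCongr hlenf i) := rfl
  rw [h1]
  have h2 : wf.get (finCongr hlenf i) = f (w[(i : ℕ)]'hi) (List.getElem_mem hi) := by
    simp [wf, List.get_eq_getElem, List.getElem_pmap]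
  rw [h2]
  have h3 : (f (w[(i : ℕ)]'hi) (List.getElem_mem hi) : ℕ) + 1 = w[(i : ℕ)]'hi := by
    have := hb _ (List.getElem_mem hi)
    simp only [f]
    omega
  rw [h3]
  exact List.Nodup.idxOf_getElem hnd _ _

end Aux18

/-- For every binary tree `T` of size `n`: `ExtL(T) ⊆ ExtL(inc(T))` and some
`σ ∈ ExtL(T)` dominates every `μ ∈ ExtL(inc(T))` for co-inversions (the weak-order-maximal
linear extension of `inc(T)` is a linear extension of `T`); symmetrically,
`ExtL(T) ⊆ ExtL(dec(T))` and some `τ ∈ ExtL(T)` satisfies `coinv(τ) ⊆ coinv(μ)` for every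
`μ ∈ ExtL(dec(T))`. -/
theorem extremal_linear_extensions (T : BinTree) :
    ((∀ σ : Equiv.Perm (Fin T.size),
        IsLinExt T.size (bstRel T) σ → IsLinExt T.size (incRel T) σ) ∧
      ∃ σ : Equiv.Perm (Fin T.size), IsLinExt T.size (bstRel T) σ ∧
        ∀ μ : Equiv.Perm (Fin T.size), IsLinExt T.size (incRel T) μ →
          coinv T.size μ ⊆ coinv T.size σ) ∧
    ((∀ σ : Equiv.Perm (Fin T.size),
        IsLinExt T.size (bstRel T) σ → IsLinExt T.size (decRel T) σ) ∧
      ∃ τ : Equiv.Perm (Fin T.size), IsLinExt T.size (bstRel T) τ ∧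
        ∀ μ : Equiv.Perm (Fin T.size), IsLinExt T.size (decRel T) μ →
          coinv T.size τ ⊆ coinv T.size μ) := by
  have hmemT : ∀ i : Fin T.size, (i : ℕ) + 1 ∈ wMax T :=
    fun i => (mem_wMax T _).2 ⟨by omega, by have := i.isLt; omega⟩
  have hmemT' : ∀ i : Fin T.size, (i : ℕ) + 1 ∈ wMin T :=
    fun i => (mem_wMin T _).2 ⟨by omega, by have := i.isLt; omega⟩
  obtain ⟨σ, hσ⟩ := exists_perm_of_word T.size (wMax T) (length_wMax T) (nodup_wMax T)
    (mem_wMax T)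
  obtain ⟨τ, hτ⟩ := exists_perm_of_word T.size (wMin T) (length_wMin T) (nodup_wMin T)
    (mem_wMin T)
  have hσext : IsLinExt T.size (bstRel T) σ := by
    intro i j h
    have := wMax_ext T _ _ h
    rw [hσ i, hσ j] at this
    exact this
  have hτext : IsLinExt T.size (bstRel T) τ := by
    intro i j h
    have := wMin_ext T _ _ h
    rw [hτ i, hτ j] at this
    exact this
  refine ⟨⟨fun ρ hρ i j h => hρ i j h.2, σ, hσext, ?_⟩,
    ⟨fun ρ hρ i j h => hρ i j h.2, τ, hτext, ?_⟩⟩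
  · -- dominance for inc
    intro μ hμ p hp
    obtain ⟨i, j, hij, hlt, rfl⟩ := hp
    set i' := σ.symm (μ i) with hi'
    set j' := σ.symm (μ j) with hj'
    have hσi : σ i' = μ i := σ.apply_symm_apply (μ i)
    have hσj : σ j' = μ j := σ.apply_symm_apply (μ j)
    have hij' : i' < j' := by
      rcases lt_trichotomy i' j' with h | h | h
      · exact h
      · exfalso
        rw [hi', hj'] at h
        have : μ i = μ j := σ.symm.injective h
        rw [this] at hlt
        exact lt_irrefl _ hlt
      · exfalso
        have hidx : (wMax T).idxOf ((μ j : ℕ) + 1) < (wMax T).idxOf ((μ i : ℕ) + 1) := by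
          rw [← hσi, ← hσj, hσ i', hσ j']
          exact h
        have hrec := wMax_max T ((μ i : ℕ) + 1) ((μ j : ℕ) + 1)
          (by have : (μ j : ℕ) < (μ i : ℕ) := hlt; omega) (hmemT (μ i)) (hmemT (μ j)) hidx
        have := hμ j i hrec
        exact absurd hij (not_lt.2 (le_of_lt this))
    exact ⟨i', j', hij', by rw [hσi, hσj]; exact hlt, by rw [hσi, hσj]⟩
  · -- minimality for dec
    intro μ hμ p hp
    obtain ⟨i, j, hij, hlt, rfl⟩ := hp
    have hidx : (wMin T).idxOf ((τ i : ℕ) + 1) < (wMin T).idxOf ((τ j : ℕ) + 1) := by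
      rw [hτ i, hτ j]
      exact hij
    have hrec := wMin_min T ((τ i : ℕ) + 1) ((τ j : ℕ) + 1)
      (by have : (τ j : ℕ) < (τ i : ℕ) := hlt; omega) (hmemT' (τ i)) (hmemT' (τ j)) hidx
    set i' := μ.symm (τ i) with hi'
    set j' := μ.symm (τ j) with hj'
    have hμi : μ i' = τ i := μ.apply_symm_apply (τ i)
    have hμj : μ j' = τ j := μ.apply_symm_apply (τ j)
    have hij' : i' < j' := by
      apply hμ
      rw [hμi, hμj]
      exact hrec
    exact ⟨i', j', hij', by rw [hμi, hμj]; exact hlt, by rw [hμi, hμj]⟩
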